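/- Let N ≥ 1, let β₁,…,β_N > 0 with β := ∑_{k=1}^{N} β_k, and let κ > 0. Define Q := β·diag(1/β₁,…,1/β_N) − (1−κ)·𝟙𝟙ᵀ, where 𝟙 is the all-ones vector in ℝᴺ. Then Q is positive definite. Consequently, with b_k = κ·β_k for all k, the matrix B := −I_N + (1/β)·(𝛃 − 𝐛)·𝟙ᵀ (where 𝛃 = (β₁,…,β_N), 𝐛 = (b₁,…,b_N)) and the diagonal matrix D := diag(β/β₁,…,β/β_N) satisfy BᵀD + DB = −2Q ≺ 0; in particular, B is diagonally stable with certificate D. -/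

import Mathlib

open Matrix

/-- A real square matrix `A` is *diagonally stable* if there exists a diagonal matrix `D`
with positive diagonal entries such that `Aᵀ D + D A` is negative definite. -/
def DiagonallyStable {n : Type*} [Fintype n] [DecidableEq n] (A : Matrix n n ℝ) : Prop :=
  ∃ d : n → ℝ, (∀ i, 0 < d i) ∧
    (-(Aᵀ * Matrix.diagonal d + Matrix.diagonal d * A)).PosDef

/-- with the uniform bias tuning `bₖ = κ βₖ`, the matrix
`Q = β diag(1/βₖ) - (1-κ) 𝟙𝟙ᵀ` is positive definite and certifies diagonal
stability of `B` via `D = diag(β/βₖ)`: `Bᵀ D + D B = -2Q ≺ 0`. -/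
theorem agc_uniform_bias_certificate (N : ℕ) (hN : 1 ≤ N)
    (β : Fin N → ℝ) (hβ : ∀ k, 0 < β k)
    (βtot : ℝ) (hβtot : βtot = ∑ k, β k)
    (κ : ℝ) (hκ : 0 < κ)
    (b : Fin N → ℝ) (hb : ∀ k, b k = κ * β k)
    (Q B D : Matrix (Fin N) (Fin N) ℝ)
    (hQ : Q = βtot • Matrix.diagonal (fun k => (β k)⁻¹) -
        (1 - κ) • Matrix.vecMulVec (fun _ => 1) (fun _ => 1))
    (hB : B = -(1 : Matrix (Fin N) (Fin N) ℝ) +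
        (1 / βtot) • Matrix.vecMulVec (β - b) (fun _ => 1))
    (hD : D = Matrix.diagonal (fun k => βtot / β k)) :
    Q.PosDef ∧ Bᵀ * D + D * B = -((2 : ℝ) • Q) ∧ (-(Bᵀ * D + D * B)).PosDef := by
  have hβtot0 : 0 < βtot := by
    rw [hβtot]
    exact Finset.sum_pos (fun k _ => hβ k) ⟨⟨0, hN⟩, Finset.mem_univ _⟩
  -- quadratic form of Q
  have hquad : ∀ x : Fin N → ℝ, x ⬝ᵥ Q *ᵥ x
      = βtot * (∑ k, x k ^ 2 * (β k)⁻¹) - (1 - κ) * (∑ k, x k) ^ 2 := by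
    intro x
    rw [hQ]
    rw [sub_mulVec, dotProduct_sub, smul_mulVec, dotProduct_smul,
      smul_mulVec, dotProduct_smul, smul_eq_mul, smul_eq_mul]
    congr 1
    · congr 1
      simp only [dotProduct, mulVec_diagonal]
      exact Finset.sum_congr rfl fun k _ => by ring
    · congr 1
      simp only [dotProduct, mulVec, vecMulVec_apply, one_mul, mul_one]
      rw [sq, ← Finset.sum_mul]
  -- Cauchy–Schwarz
  have hCS : ∀ x : Fin N → ℝ, (∑ k, x k) ^ 2 ≤ βtot * ∑ k, x k ^ 2 * (β k)⁻¹ := by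
    intro x
    have h := Finset.sum_mul_sq_le_sq_mul_sq Finset.univ
      (fun k => Real.sqrt (β k)) (fun k => x k / Real.sqrt (β k))
    have hs : ∀ k, Real.sqrt (β k) ≠ 0 := fun k =>
      ne_of_gt (Real.sqrt_pos.mpr (hβ k))
    have h1 : (∑ k, Real.sqrt (β k) * (x k / Real.sqrt (β k))) = ∑ k, x k :=
      Finset.sum_congr rfl fun k _ => by
        rw [mul_comm, div_mul_cancel₀ _ (hs k)]
    have h2 : (∑ k, Real.sqrt (β k) ^ 2) = βtot := by
      rw [hβtot]
      exact Finset.sum_congr rfl fun k _ => Real.sq_sqrt (hβ k).le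
    have h3 : (∑ k, (x k / Real.sqrt (β k)) ^ 2) = ∑ k, x k ^ 2 * (β k)⁻¹ :=
      Finset.sum_congr rfl fun k _ => by
        rw [div_pow, Real.sq_sqrt (hβ k).le, div_eq_mul_inv]
    rw [h1, h2, h3] at h
    exact h
  -- Q is positive definite
  have hherm : Q.IsHermitian := by
    rw [hQ]
    show _ᴴ = _
    ext i j
    simp only [conjTranspose_apply, Matrix.sub_apply, Matrix.smul_apply, diagonal_apply,
      vecMulVec_apply, smul_eq_mul, star_trivial, mul_one]
    rcases eq_or_ne i j with h | h
    · subst h; rfl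
    · simp [h, Ne.symm h]
  have hQpd : Q.PosDef := by
    refine posDef_iff_dotProduct_mulVec.mpr ⟨hherm, fun x hx => ?_⟩
    have hT : 0 < ∑ k, x k ^ 2 * (β k)⁻¹ := by
      obtain ⟨k, hk⟩ := Function.ne_iff.mp hx
      refine Finset.sum_pos'
        (fun i _ => mul_nonneg (sq_nonneg _) (inv_nonneg.mpr (hβ i).le))
        ⟨k, Finset.mem_univ k, ?_⟩
      exact mul_pos (lt_of_le_of_ne (sq_nonneg _) (Ne.symm (pow_ne_zero 2 hk)))
        (inv_pos.mpr (hβ k))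
    have hstar : star x = x := star_trivial x
    rw [hstar, hquad x]
    rcases eq_or_ne (∑ k, x k) 0 with hS | hS
    · rw [hS]
      have := mul_pos hβtot0 hT
      nlinarith
    · have hS2 : 0 < (∑ k, x k) ^ 2 := by positivity
      have h1 := hCS x
      nlinarith [mul_pos hκ hS2]
  -- the matrix identity
  have hid : Bᵀ * D + D * B = -((2 : ℝ) • Q) := by
    ext i j
    have hβi := (hβ i).ne'
    have hβj := (hβ j).ne'
    simp only [hB, hD, hQ, Matrix.add_apply, mul_diagonal, diagonal_mul, transpose_apply,
      Matrix.neg_apply, Matrix.smul_apply, Matrix.sub_apply, one_apply, vecMulVec_apply, Pi.sub_apply,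
      smul_eq_mul, diagonal_apply, hb, mul_one]
    rcases eq_or_ne i j with h | h
    · subst h
      simp only [if_pos rfl, if_true]
      field_simp
      ring
    · simp only [if_neg h, if_neg (Ne.symm h)]
      field_simp
      ring
  refine ⟨hQpd, hid, ?_⟩
  rw [hid, neg_neg]
  refine posDef_iff_dotProduct_mulVec.mpr ⟨?_, fun x hx => ?_⟩
  · show _ᴴ = _
    rw [conjTranspose_smul, hQpd.1.eq]
    simp
  · rw [smul_mulVec, dotProduct_smul, smul_eq_mul]
    exact mul_pos two_pos (hQpd.dotProduct_mulVec_pos hx)
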